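/- In an orthomodular poset of finite height, with x ⊙ y := Min U(x, y') ∧ y and x → y := x' ∨ Max L(x, y), operator left adjointness holds: for all a, b, c ∈ P, (a ⊙ b) ⊑ {c} if and only if {a} ⊑ (b → c), where A ⊑ B means some element of A is ≤ some element of B. -/

import Mathlib

/-- Common upper bounds of two elements. -/
def UB {P : Type*} [PartialOrder P] (a b : P) : Set P := {u | a ≤ u ∧ b ≤ u}

/-- Common lower bounds of two elements. -/
def LB {P : Type*} [PartialOrder P] (a b : P) : Set P := {l | l ≤ a ∧ l ≤ b}

/-- Minimal elements of the set of common upper bounds. -/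
def MinU {P : Type*} [PartialOrder P] (a b : P) : Set P :=
  {m | m ∈ UB a b ∧ ∀ x ∈ UB a b, x ≤ m → x = m}

/-- Maximal elements of the set of common lower bounds. -/
def MaxL {P : Type*} [PartialOrder P] (a b : P) : Set P :=
  {m | m ∈ LB a b ∧ ∀ x ∈ LB a b, m ≤ x → x = m}

/-- A poset has finite height if it contains no infinite chain. -/
def FinHeight (P : Type*) [Preorder P] : Prop :=
  ∀ C : Set P, IsChain (· ≤ ·) C → C.Finite

/-- x ⊙ y := Min U(x, y') ∧ y, elementwise (w is a witness of an existing meet). -/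
def odot {P : Type*} [PartialOrder P] (c : P → P) (x y : P) : Set P :=
  {w | ∃ m ∈ MinU x (c y), IsGLB {m, y} w}

/-- x → y := x' ∨ Max L(x, y), elementwise (w is a witness of an existing join). -/
def opImp {P : Type*} [PartialOrder P] (c : P → P) (x y : P) : Set P :=
  {w | ∃ m ∈ MaxL x y, IsLUB {c x, m} w}

/-- The order-like relation ⊑ on subsets. -/
def SubLE {P : Type*} [PartialOrder P] (A B : Set P) : Prop :=
  ∃ a ∈ A, ∃ b ∈ B, a ≤ b

/-- A ⊙ y := ⋃ x ∈ A, x ⊙ y. -/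
def setOdot {P : Type*} [PartialOrder P] (c : P → P) (A : Set P) (y : P) : Set P :=
  ⋃ x ∈ A, odot c x y

section Aux

variable {P : Type*} [PartialOrder P]

/-- Every nonempty finite chain has a greatest element. -/
lemma chain_exists_top {C : Set P} (hC : IsChain (· ≤ ·) C) (hfin : C.Finite)
    {y : P} (hy : y ∈ C) : ∃ g ∈ C, ∀ z ∈ C, z ≤ g := by
  obtain ⟨g, hg, hgmax⟩ := Set.Finite.exists_maximalFor id C hfin ⟨y, hy⟩
  refine ⟨g, hg, fun z hz => ?_⟩
  rcases eq_or_ne z g with rfl | hne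
  · exact le_rfl
  · rcases hC hz hg hne with h | h
    · exact h
    · exact hgmax hz h

/-- In a finite-height poset, every element of a set lies below a maximal element. -/
lemma finHeight_exists_max (hfin : FinHeight P) (S : Set P) {x : P} (hx : x ∈ S) :
    ∃ m ∈ S, x ≤ m ∧ ∀ y ∈ S, m ≤ y → y = m := by
  obtain ⟨m, hxm, hmS, hmax⟩ := zorn_le_nonempty₀ S
    (fun C hCS hC y hy => by
      obtain ⟨g, hg, hgub⟩ := chain_exists_top hC (hfin C hC) hy
      exact ⟨g, hCS hg, hgub⟩) x hx
  exact ⟨m, hmS, hxm, fun y hy hmy => le_antisymm (hmax hy hmy) hmy⟩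

lemma finHeight_dual (hfin : FinHeight P) : FinHeight Pᵒᵈ := by
  intro C hC
  have h : IsChain (· ≤ ·) (OrderDual.ofDual '' C) := by
    rintro _ ⟨p, hp, rfl⟩ _ ⟨q, hq, rfl⟩ hne
    rcases hC hp hq (fun h => hne (congrArg _ h)) with h | h
    · exact Or.inr h
    · exact Or.inl h
  have := hfin _ h
  exact Set.Finite.of_finite_image this (Function.Injective.injOn (fun _ _ h => h))

/-- In a finite-height poset, every element of a set lies above a minimal element. -/
lemma finHeight_exists_min (hfin : FinHeight P) (S : Set P) {x : P} (hx : x ∈ S) :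
    ∃ m ∈ S, m ≤ x ∧ ∀ y ∈ S, y ≤ m → y = m :=
  finHeight_exists_max (P := Pᵒᵈ) (finHeight_dual hfin) S hx

variable (c : P → P) (hanti : ∀ x y : P, x ≤ y → c y ≤ c x) (hinv : ∀ x : P, c (c x) = x)

include hanti hinv in
lemma lub_compl {x y j : P} (h : IsLUB {x, y} j) : IsGLB {c x, c y} (c j) := by
  constructor
  · rintro t (rfl | rfl)
    · exact hanti _ _ (h.1 (Set.mem_insert _ _))
    · exact hanti _ _ (h.1 (Set.mem_insert_of_mem _ rfl))
  · intro l hl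
    have hx : x ≤ c l := by
      have := hanti _ _ (hl (Set.mem_insert _ _))
      rwa [hinv] at this
    have hy : y ≤ c l := by
      have := hanti _ _ (hl (Set.mem_insert_of_mem _ rfl))
      rwa [hinv] at this
    have : j ≤ c l := h.2 (by rintro t (rfl | rfl) <;> assumption)
    have := hanti _ _ this
    rwa [hinv] at this

include hanti hinv in
lemma glb_compl {x y w : P} (h : IsGLB {x, y} w) : IsLUB {c x, c y} (c w) := by
  constructor
  · rintro t (rfl | rfl)
    · exact hanti _ _ (h.1 (Set.mem_insert _ _))
    · exact hanti _ _ (h.1 (Set.mem_insert_of_mem _ rfl))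
  · intro u hu
    have hx : c u ≤ x := by
      have := hanti _ _ (hu (Set.mem_insert _ _))
      rwa [hinv] at this
    have hy : c u ≤ y := by
      have := hanti _ _ (hu (Set.mem_insert_of_mem _ rfl))
      rwa [hinv] at this
    have : c u ≤ w := h.2 (by rintro t (rfl | rfl) <;> assumption)
    have := hanti _ _ this
    rwa [hinv] at this

end Aux

theorem stmt10 {P : Type*} [PartialOrder P] [BoundedOrder P] (c : P → P)
    (hanti : ∀ x y : P, x ≤ y → c y ≤ c x)
    (hinv : ∀ x : P, c (c x) = x)
    (hinf : ∀ x : P, IsGLB {x, c x} ⊥)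
    (hsup : ∀ x : P, IsLUB {x, c x} ⊤)
    (hjoin : ∀ x y : P, x ≤ c y → ∃ j, IsLUB {x, y} j)
    (hOM : ∀ x y j : P, x ≤ y → IsLUB {c y, x} j → IsLUB {x, c j} y)
    (hfin : FinHeight P) :
    ∀ a b z : P, SubLE (odot c a b) {z} ↔ SubLE {a} (opImp c b z) := by
  intro a b z
  constructor
  · rintro ⟨w, ⟨m, ⟨⟨ham, hbm⟩, -⟩, hglb⟩, z', hz', hwz⟩
    rw [Set.mem_singleton_iff] at hz'
    rw [hz'] at hwz
    -- hbm : c b ≤ m, hglb : IsGLB {m, b} w, hwz : w ≤ z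
    have hwm : w ≤ m := hglb.1 (Set.mem_insert _ _)
    have hwb : w ≤ b := hglb.1 (Set.mem_insert_of_mem _ rfl)
    -- m = (c b) ∨ w by orthomodularity
    have hlubcw : IsLUB {c m, c b} (c w) := glb_compl c hanti hinv hglb
    have hLm : IsLUB {c b, w} m := by
      have := hOM (c b) m (c w) hbm hlubcw
      rwa [hinv] at this
    -- extend w to a maximal common lower bound d of b and z
    obtain ⟨d, hdS, hwd, hdmax⟩ := finHeight_exists_max hfin (LB b z) ⟨hwb, hwz⟩
    have hdb : d ≤ b := hdS.1
    -- v := (c b) ∨ d exists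
    obtain ⟨v, hv⟩ := hjoin (c b) d (hanti _ _ hdb)
    refine ⟨a, rfl, v, ⟨d, ⟨hdS, hdmax⟩, hv⟩, ?_⟩
    -- a ≤ m ≤ v
    refine ham.trans (hLm.2 ?_)
    rintro t (rfl | rfl)
    · exact hv.1 (Set.mem_insert _ _)
    · exact hwd.trans (hv.1 (Set.mem_insert_of_mem _ rfl))
  · rintro ⟨a', ha', v, ⟨d, ⟨⟨hdb, hdz⟩, -⟩, hv⟩, hav⟩
    rw [Set.mem_singleton_iff] at ha'
    rw [ha'] at hav
    -- hv : IsLUB {c b, d} v, hav : a ≤ v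
    have hbv : c b ≤ v := hv.1 (Set.mem_insert _ _)
    have hdv : d ≤ v := hv.1 (Set.mem_insert_of_mem _ rfl)
    -- take a minimal upper bound m of {a, c b} below v
    obtain ⟨m, hmUB, hmv, hmmin⟩ := finHeight_exists_min hfin (UB a (c b)) ⟨hav, hbv⟩
    have hbm : c b ≤ m := hmUB.2
    -- w := m ∧ b exists
    have hcmb : c m ≤ c (c b) := hanti _ _ hbm
    obtain ⟨j, hj⟩ := hjoin (c m) (c b) hcmb
    have hglb : IsGLB {m, b} (c j) := by
      have := lub_compl c hanti hinv hj
      rwa [hinv, hinv] at this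
    -- orthomodularity: IsGLB {v, b} d
    have h1 : IsLUB {d, c v} b := hOM d b v hdb hv
    have h2 : IsLUB {c v, c b} (c d) :=
      hOM (c v) (c d) b (hanti _ _ hdv) (by rw [hinv]; exact h1)
    have h3 : IsGLB {v, b} d := by
      have := lub_compl c hanti hinv h2
      rwa [hinv, hinv, hinv] at this
    -- c j ≤ d ≤ z
    have hjm : c j ≤ m := hglb.1 (Set.mem_insert _ _)
    have hjb : c j ≤ b := hglb.1 (Set.mem_insert_of_mem _ rfl)
    have hjd : c j ≤ d := h3.2 (by rintro t (rfl | rfl)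
                                   · exact hjm.trans hmv
                                   · exact hjb)
    exact ⟨c j, ⟨m, ⟨hmUB, hmmin⟩, hglb⟩, z, rfl, hjd.trans hdz⟩
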